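/- Let X be a compact Hausdorff space, μ a Borel probability measure on X, and τ a topological measure on X such that for every closed solid set C ⊆ X, τ(C) = 0 if μ(C) < 1/2 and τ(C) = 1 if μ(C) ≥ 1/2. Then for every open solid set O ⊆ X: τ(O) = 0 if μ(O) ≤ 1/2, and τ(O) = 1 if μ(O) > 1/2. -/
import Mathlib


open MeasureTheory Topology Metric Filter
open scoped Manifold NNReal ENNReal

/-- A quasi-state on a topological space `X`: a functional on `C(X,ℝ)` which is
normalized, monotone, and linear on each singly-generated subalgebra
`C(f) = {φ ∘ f | φ : ℝ → ℝ continuous}`. -/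
structure QuasiState (X : Type*) [TopologicalSpace X] where
  toFun : C(X, ℝ) → ℝ
  normalized : toFun 1 = 1
  mono : ∀ f g : C(X, ℝ), (∀ x, f x ≤ g x) → toFun f ≤ toFun g
  add_comp : ∀ (φ ψ : C(ℝ, ℝ)) (f : C(X, ℝ)),
    toFun (φ.comp f + ψ.comp f) = toFun (φ.comp f) + toFun (ψ.comp f)
  smul_comp : ∀ (c : ℝ) (φ : C(ℝ, ℝ)) (f : C(X, ℝ)),
    toFun (c • φ.comp f) = c * toFun (φ.comp f)

/-- A topological measure on `X`: a `[0,1]`-valued set function defined on the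
collection of open or closed subsets, normalized, monotone, finitely additive
on disjoint unions that stay in the collection, and inner regular on opens. -/
structure TopMeasure (X : Type*) [TopologicalSpace X] where
  toFun : Set X → ℝ
  nonneg : ∀ A : Set X, (IsOpen A ∨ IsClosed A) → 0 ≤ toFun A
  le_one : ∀ A : Set X, (IsOpen A ∨ IsClosed A) → toFun A ≤ 1
  apply_univ : toFun Set.univ = 1
  mono : ∀ A A' : Set X, (IsOpen A ∨ IsClosed A) → (IsOpen A' ∨ IsClosed A') →
    A ⊆ A' → toFun A ≤ toFun A'
  additive : ∀ (m : ℕ) (A : Set X) (B : Fin m → Set X),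
    (IsOpen A ∨ IsClosed A) → (∀ i, IsOpen (B i) ∨ IsClosed (B i)) →
    (Pairwise fun i j => Disjoint (B i) (B j)) → A = ⋃ i, B i →
    toFun A = ∑ i, toFun (B i)
  regular : ∀ O : Set X, IsOpen O →
    toFun O = sSup {t : ℝ | ∃ K : Set X, IsClosed K ∧ K ⊆ O ∧ t = toFun K}

/-- A quasi-state and a topological measure correspond to one another under the
Aarnes representation theorem. -/
def Corresponds {X : Type*} [TopologicalSpace X] (ζ : QuasiState X) (τ : TopMeasure X) : Prop :=
  ∀ f : C(X, ℝ), ζ.toFun f = sInf (Set.range f) +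
    ∫ s in Set.Icc (sInf (Set.range f)) (sSup (Set.range f)), τ.toFun {x | s ≤ f x}

/-- A set is solid if it and its complement are both connected. -/
def IsSolid {X : Type*} [TopologicalSpace X] (A : Set X) : Prop :=
  IsPreconnected A ∧ IsPreconnected Aᶜ

/-- The (split) spectrum of a Borel probability measure. -/
def measureSpec {X : Type*} [TopologicalSpace X] [MeasurableSpace X]
    (μ : Measure X) : Set ℝ :=
  {α | α ∈ Set.Ioo (0 : ℝ) 1 ∧ ∃ C C' : Set X, IsClosed C ∧ IsSolid C ∧
    IsClosed C' ∧ IsSolid C' ∧ Disjoint C C' ∧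
    μ C = ENNReal.ofReal α ∧ μ C' = ENNReal.ofReal (1 - α)}

/-- `μ ∈ P₀(X)`: a Borel probability measure whose spectrum avoids `1/2`. -/
def MemP0 {X : Type*} [TopologicalSpace X] [MeasurableSpace X] (μ : Measure X) : Prop :=
  IsProbabilityMeasure μ ∧ (1/2 : ℝ) ∉ measureSpec μ

/-- The Aarnes condition for the topological measure `τ` with respect to `μ`:
on closed solid sets, `τ` is `0` below measure `1/2` and `1` from `1/2` on. -/
def AarnesCondition {X : Type*} [TopologicalSpace X] [MeasurableSpace X]
    (τ : TopMeasure X) (μ : Measure X) : Prop :=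
  ∀ C : Set X, IsClosed C → IsSolid C →
    (μ C < 1/2 → τ.toFun C = 0) ∧ (1/2 ≤ μ C → τ.toFun C = 1)

/-- The support of a measure on a topological space. -/
def measureSupport {Y : Type*} [TopologicalSpace Y] [MeasurableSpace Y] (ρ : Measure Y) : Set Y :=
  {y | ∀ U : Set Y, IsOpen U → y ∈ U → ρ U ≠ 0}

/-- The `∞`-Wasserstein distance between two Borel probability measures. -/
noncomputable def Winf {X : Type*} [MetricSpace X] [MeasurableSpace X]
    (μ ν : Measure X) : ℝ :=
  sInf {r : ℝ | ∃ ρ : Measure (X × X), IsProbabilityMeasure ρ ∧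
    ρ.map Prod.fst = μ ∧ ρ.map Prod.snd = ν ∧
    ∀ p ∈ measureSupport ρ, dist p.1 p.2 ≤ r}

/-- The `1`-Wasserstein (Kantorovich–Rubinstein dual) distance between quasi-states. -/
noncomputable def W1qs {X : Type*} [MetricSpace X] (ζ ζ' : QuasiState X) : ℝ :=
  sSup {r : ℝ | ∃ f : C(X, ℝ), LipschitzWith 1 f ∧ r = |ζ.toFun f - ζ'.toFun f|}

/-- The `1`-Wasserstein distance between measures (Kantorovich–Rubinstein dual form). -/
noncomputable def W1meas {X : Type*} [MetricSpace X] [MeasurableSpace X]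
    (μ ν : Measure X) : ℝ :=
  sSup {r : ℝ | ∃ f : X → ℝ, LipschitzWith 1 f ∧ r = |∫ x, f x ∂μ - ∫ x, f x ∂ν|}

/-- if `τ` satisfies the Aarnes condition with respect to `μ` on closed
solid sets, then on open solid sets `τ` is `0` up to measure `1/2` and `1` above. -/
theorem aarnes_on_open_solid {X : Type*} [TopologicalSpace X] [CompactSpace X] [T2Space X]
    [MeasurableSpace X] [BorelSpace X]
    (μ : Measure X) [IsProbabilityMeasure μ] (τ : TopMeasure X)
    (h : AarnesCondition τ μ) (O : Set X) (hO : IsOpen O) (hsolid : IsSolid O) :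
    (μ O ≤ 1/2 → τ.toFun O = 0) ∧ (1/2 < μ O → τ.toFun O = 1) := by
  have hCsolid' : IsSolid Oᶜ := ⟨hsolid.2, by rw [compl_compl]; exact hsolid.1⟩
  have hC := h Oᶜ hO.isClosed_compl hCsolid'
  have hsplit : τ.toFun O + τ.toFun Oᶜ = 1 := by
    have := τ.additive 2 Set.univ ![O, Oᶜ] (Or.inl isOpen_univ)
      (by intro i; fin_cases i
          · exact Or.inl hO
          · exact Or.inr hO.isClosed_compl)
      (by intro i j hij
          fin_cases i <;> fin_cases j <;>
            first
              | exact absurd rfl hij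
              | exact disjoint_compl_right
              | exact disjoint_compl_left)
      (by ext x
          simp only [Set.mem_iUnion, Fin.exists_fin_two, Matrix.cons_val_zero,
            Matrix.cons_val_one, Matrix.head_cons, Set.mem_univ, true_iff]
          exact or_not)
    rw [τ.apply_univ] at this
    rw [Fin.sum_univ_two] at this
    simp only [Matrix.cons_val_zero, Matrix.cons_val_one, Matrix.head_cons] at this
    linarith
  have hμc : μ Oᶜ = 1 - μ O := by
    rw [measure_compl hO.measurableSet (measure_ne_top μ O), measure_univ]
  constructor
  · intro hle
    have h1 : (1/2 : ℝ≥0∞) ≤ μ Oᶜ := by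
      rw [hμc]
      have : (1:ℝ≥0∞) - 1/2 ≤ 1 - μ O := by
        exact tsub_le_tsub_left hle 1
      calc (1/2:ℝ≥0∞) = 1 - 1/2 := by norm_num [ENNReal.sub_eq_of_eq_add]
        _ ≤ 1 - μ O := this
    have := hC.2 h1
    linarith
  · intro hlt
    have h1 : μ Oᶜ < 1/2 := by
      rw [hμc]
      have hO1 : μ O ≤ 1 := prob_le_one
      rw [ENNReal.sub_lt_iff_lt_right (measure_ne_top μ O) hO1]
      calc (1:ℝ≥0∞) = 1/2 + 1/2 := by rw [ENNReal.add_halves]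
        _ < 1/2 + μ O := by exact ENNReal.add_lt_add_left (by norm_num) hlt
    have := hC.1 h1
    linarith
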